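/- In the hom-category C̃(c,c') with c ≠ c', every arrow [a_*] : x → x' can be represented by an injective monotone map a : [n] → [n'] satisfying a(0) = 0 and a(n) = n'. -/

import Mathlib

open CategoryTheory

/-- An arrow in a category "is an identity" if its source and target coincide and it is
the identity of that object. -/
def IsIdArrow {C : Type*} [Category C] {X Y : C} (f : X ⟶ Y) : Prop :=
  ∃ h : X = Y, f = eqToHom h

/-- The relation `∼` of the paper on parallel maps of chains `a_*, b_* : x → x'` in the
category of simplices `Δ/C`: `a_* ∼ b_*` iff `x'(min (a i) (b i) → max (a i) (b i))` is an
identity for every `i`.  Here a chain (an `n`-simplex of the nerve of `C`) is a functor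
`Fin (n+1) ⥤ C` from the finite ordinal `[n]`. -/
def SimRel {C : Type*} [Category C] {n n' : ℕ} (x' : Fin (n' + 1) ⥤ C)
    (a b : Fin (n + 1) →o Fin (n' + 1)) : Prop :=
  ∀ i : Fin (n + 1),
    IsIdArrow (x'.map (homOfLE (min_le_max : min (a i) (b i) ≤ max (a i) (b i))))

/-- `a : [n] → [n']` underlies an arrow of `Δ/C` from the chain `x` to the chain `x'`
precisely when `x' ∘ a = x`. -/
def ChainCompat {C : Type*} [Category C] {n n' : ℕ} (x : Fin (n + 1) ⥤ C)
    (x' : Fin (n' + 1) ⥤ C) (a : Fin (n + 1) →o Fin (n' + 1)) : Prop :=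
  a.monotone.functor ⋙ x' = x

/-- The arrows `x → x'` of the category of simplices `Δ/C`. -/
def ChainArrow {C : Type*} [Category C] {n n' : ℕ} (x : Fin (n + 1) ⥤ C)
    (x' : Fin (n' + 1) ⥤ C) : Type _ :=
  { a : Fin (n + 1) →o Fin (n' + 1) // ChainCompat x x' a }
/-- A chain `x : [n] → C` is nondegenerate if none of its elementary arrows
`x(i → i+1)` is an identity. -/
def NondegChain {C : Type*} [Category C] {n : ℕ} (x : Fin (n + 1) ⥤ C) : Prop :=
  ∀ i : Fin n, ¬ IsIdArrow (x.map (homOfLE (Fin.castSucc_le_succ i)))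

/-- The condition for an arrow `a_* : x → x'` of `Δ/C` to preserve the first element
up to identities, i.e. `x'(0 → a 0) = id`. -/
def PreservesFirst {C : Type*} [Category C] {n n' : ℕ} (x' : Fin (n' + 1) ⥤ C)
    (a : Fin (n + 1) →o Fin (n' + 1)) : Prop :=
  IsIdArrow (x'.map (homOfLE (Fin.zero_le (a 0))))

/-- The condition for an arrow `a_* : x → x'` of `Δ/C` to preserve the last element
up to identities, i.e. `x'(a n → n') = id`. -/
def PreservesLast {C : Type*} [Category C] {n n' : ℕ} (x' : Fin (n' + 1) ⥤ C)
    (a : Fin (n + 1) →o Fin (n' + 1)) : Prop :=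
  IsIdArrow (x'.map (homOfLE (Fin.le_last (a (Fin.last n)))))

section Helpers

variable {C : Type*} [Category C]

lemma isIdArrow_map_congr {P : Type*} [Preorder P] (F : P ⥤ C) {i j i' j' : P}
    (h : i ≤ j) (h' : i' ≤ j') (hi : i = i') (hj : j = j')
    (hid : IsIdArrow (F.map (homOfLE h))) : IsIdArrow (F.map (homOfLE h')) := by
  subst hi; subst hj; exact hid

lemma isIdArrow_map_of_eq {P : Type*} [Preorder P] (F : P ⥤ C) {i j : P}
    (e : i = j) (h : i ≤ j) : IsIdArrow (F.map (homOfLE h)) := by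
  subst e
  exact ⟨rfl, by simpa using congrArg F.map (Subsingleton.elim (homOfLE h) (𝟙 i))⟩

lemma isIdArrow_conj {X Y X' Y' : C} {f : X ⟶ Y} (e1 : X' = X) (e2 : Y = Y')
    (hf : IsIdArrow f) : IsIdArrow (eqToHom e1 ≫ f ≫ eqToHom e2) := by
  obtain ⟨h, rfl⟩ := hf
  exact ⟨e1.trans (h.trans e2), by simp⟩

lemma key_rep {P : Type*} [LinearOrder P] (F : P ⥤ C) {p q p' q' : P}
    (hpq : p ≤ q) (hpq' : p' ≤ q')
    (hp : IsIdArrow (F.map (homOfLE (min_le_max : min p p' ≤ max p p'))))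
    (hq : IsIdArrow (F.map (homOfLE (min_le_max : min q q' ≤ max q q')))) :
    ∃ (e1 : F.obj p = F.obj p') (e2 : F.obj q' = F.obj q),
      F.map (homOfLE hpq) = eqToHom e1 ≫ F.map (homOfLE hpq') ≫ eqToHom e2 := by
  rcases le_total p p' with h1 | h1 <;> rcases le_total q q' with h2 | h2
  · obtain ⟨ep, hep⟩ := isIdArrow_map_congr F _ h1 (min_eq_left h1) (max_eq_right h1) hp
    obtain ⟨eq2, heq2⟩ := isIdArrow_map_congr F _ h2 (min_eq_left h2) (max_eq_right h2) hq
    refine ⟨ep, eq2.symm, ?_⟩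
    have hc : F.map (homOfLE hpq) ≫ F.map (homOfLE h2)
        = F.map (homOfLE h1) ≫ F.map (homOfLE hpq') := by
      rw [← F.map_comp, ← F.map_comp]; congr 1
    rw [hep, heq2] at hc
    calc F.map (homOfLE hpq)
        = (F.map (homOfLE hpq) ≫ eqToHom eq2) ≫ eqToHom eq2.symm := by simp
      _ = (eqToHom ep ≫ F.map (homOfLE hpq')) ≫ eqToHom eq2.symm := by rw [hc]
      _ = _ := by simp
  · obtain ⟨ep, hep⟩ := isIdArrow_map_congr F _ h1 (min_eq_left h1) (max_eq_right h1) hp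
    obtain ⟨eq2, heq2⟩ := isIdArrow_map_congr F _ h2 (min_eq_right h2) (max_eq_left h2) hq
    refine ⟨ep, eq2, ?_⟩
    have hc : F.map (homOfLE hpq)
        = F.map (homOfLE h1) ≫ F.map (homOfLE hpq') ≫ F.map (homOfLE h2) := by
      rw [← F.map_comp, ← F.map_comp]; congr 1
    rw [hep, heq2] at hc
    exact hc
  · obtain ⟨ep, hep⟩ := isIdArrow_map_congr F _ h1 (min_eq_right h1) (max_eq_left h1) hp
    obtain ⟨eq2, heq2⟩ := isIdArrow_map_congr F _ h2 (min_eq_left h2) (max_eq_right h2) hq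
    refine ⟨ep.symm, eq2.symm, ?_⟩
    have hc : F.map (homOfLE hpq')
        = F.map (homOfLE h1) ≫ F.map (homOfLE hpq) ≫ F.map (homOfLE h2) := by
      rw [← F.map_comp, ← F.map_comp]; congr 1
    rw [hep, heq2] at hc
    rw [hc]; simp
  · obtain ⟨ep, hep⟩ := isIdArrow_map_congr F _ h1 (min_eq_right h1) (max_eq_left h1) hp
    obtain ⟨eq2, heq2⟩ := isIdArrow_map_congr F _ h2 (min_eq_right h2) (max_eq_left h2) hq
    refine ⟨ep.symm, eq2, ?_⟩
    have hc : F.map (homOfLE h1) ≫ F.map (homOfLE hpq)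
        = F.map (homOfLE hpq') ≫ F.map (homOfLE h2) := by
      rw [← F.map_comp, ← F.map_comp]; congr 1
    rw [hep, heq2] at hc
    calc F.map (homOfLE hpq)
        = eqToHom ep.symm ≫ eqToHom ep ≫ F.map (homOfLE hpq) := by simp
      _ = eqToHom ep.symm ≫ F.map (homOfLE hpq') ≫ eqToHom eq2 := by rw [hc]

end Helpers

/-- in the hom-category `C̃(c,c')` with `c ≠ c'`, every arrow
`[a_*] : x → x'` can be represented by an injective monotone map `a : [n] → [n']`
with `a 0 = 0` and `a n = n'`. -/
theorem tilde_arrow_injective_rep {C : Type*} [Category C] {c c' : C} (hcc : c ≠ c')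
    {n n' : ℕ} (x : Fin (n + 1) ⥤ C) (x' : Fin (n' + 1) ⥤ C)
    (hx0 : x.obj 0 = c) (hxl : x.obj (Fin.last n) = c')
    (hx'0 : x'.obj 0 = c) (hx'l : x'.obj (Fin.last n') = c')
    (hx : NondegChain x) (hx' : NondegChain x')
    (a : Fin (n + 1) →o Fin (n' + 1)) (hcomp : ChainCompat x x' a)
    (hfirst : PreservesFirst x' a) (hlast : PreservesLast x' a) :
    ∃ b : Fin (n + 1) →o Fin (n' + 1),
      Function.Injective b ∧ b 0 = 0 ∧ b (Fin.last n) = Fin.last n' ∧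
      ChainCompat x x' b ∧ SimRel x' a b := by
  -- n ≠ 0 and n' ≠ 0
  have hn : n ≠ 0 := by
    rintro rfl
    exact hcc (hx0.symm.trans hxl)
  have hn' : n' ≠ 0 := by
    rintro rfl
    exact hcc (hx'0.symm.trans hx'l)
  -- a is strictly monotone
  have hsm : StrictMono a := by
    rw [Fin.strictMono_iff_lt_succ]
    intro i
    rcases lt_or_eq_of_le (a.monotone (Fin.castSucc_le_succ i)) with h | h
    · exact h
    · exfalso
      apply hx i
      have hcongr := Functor.congr_hom hcomp (homOfLE (Fin.castSucc_le_succ i))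
      have hL : IsIdArrow ((a.monotone.functor ⋙ x').map (homOfLE (Fin.castSucc_le_succ i))) :=
        isIdArrow_map_of_eq x' h _
      have hmap : x.map (homOfLE (Fin.castSucc_le_succ i))
          = eqToHom (Functor.congr_obj hcomp i.castSucc).symm
            ≫ (a.monotone.functor ⋙ x').map (homOfLE (Fin.castSucc_le_succ i))
            ≫ eqToHom (Functor.congr_obj hcomp i.succ) := by
        rw [hcongr]; simp only [Category.assoc, eqToHom_trans_assoc, eqToHom_trans, eqToHom_refl, Category.id_comp, Category.comp_id]
      rw [hmap]
      exact isIdArrow_conj _ _ hL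
  have h0ne : (0 : Fin (n + 1)) ≠ Fin.last n := by
    simp [Fin.ext_iff, eq_comm, hn]
  -- the map b
  set bf : Fin (n + 1) → Fin (n' + 1) :=
    fun i => if i = Fin.last n then Fin.last n' else if i = 0 then 0 else a i with hbf
  have hb0 : bf 0 = 0 := by simp [hbf, h0ne]
  have hbl : bf (Fin.last n) = Fin.last n' := by simp [hbf]
  have hble : ∀ i, i ≠ Fin.last n → bf i ≤ a i := by
    intro i hi
    by_cases h : i = 0
    · subst h; simpa [hbf, hi] using Fin.zero_le (a 0)
    · simp [hbf, hi, h]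
  have hbge : ∀ i, i ≠ 0 → a i ≤ bf i := by
    intro i hi
    by_cases h : i = Fin.last n
    · subst h; simpa [hbf] using Fin.le_last (a (Fin.last n))
    · simp [hbf, hi, h]
  have hbsm : StrictMono bf := by
    intro i j hij
    have hinl : i ≠ Fin.last n := (hij.trans_le (Fin.le_last j)).ne
    have h1 : bf i ≤ a i := hble i hinl
    by_cases hjl : j = Fin.last n
    · subst hjl
      rw [hbl]
      exact lt_of_le_of_lt h1 (lt_of_lt_of_le (hsm hij) (Fin.le_last _))
    · have hj0 : j ≠ 0 := ((Fin.zero_le i).trans_lt hij).ne'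
      exact lt_of_le_of_lt h1 (lt_of_lt_of_le (hsm hij) (hbge j hj0))
  -- SimRel a bf
  have hsim : ∀ i : Fin (n + 1),
      IsIdArrow (x'.map (homOfLE (min_le_max : min (a i) (bf i) ≤ max (a i) (bf i)))) := by
    intro i
    by_cases hil : i = Fin.last n
    · subst hil
      refine isIdArrow_map_congr x' (Fin.le_last (a (Fin.last n))) min_le_max ?_ ?_ hlast
      · rw [hbl, min_eq_left (Fin.le_last _)]
      · rw [hbl, max_eq_right (Fin.le_last _)]
    · by_cases hi0 : i = 0
      · subst hi0
        refine isIdArrow_map_congr x' (Fin.zero_le (a 0)) min_le_max ?_ ?_ hfirst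
        · rw [hb0, min_eq_right (Fin.zero_le _)]
        · rw [hb0, max_eq_left (Fin.zero_le _)]
      · have hbi : bf i = a i := by simp [hbf, hil, hi0]
        exact isIdArrow_map_of_eq x' (by rw [hbi, min_self, max_self]) _
  -- objectwise equality
  have hobj : ∀ i, x'.obj (bf i) = x.obj i := by
    intro i
    have h1 : x'.obj (a i) = x.obj i := Functor.congr_obj hcomp i
    rcases hsim i with ⟨e, -⟩
    rcases le_total (a i) (bf i) with h | h
    · rw [min_eq_left h, max_eq_right h] at e
      exact e.symm.trans h1
    · rw [min_eq_right h, max_eq_left h] at e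
      exact e.trans h1
  have hbcomp : ChainCompat x x' ⟨bf, hbsm.monotone⟩ := by
    show (⟨bf, hbsm.monotone⟩ : Fin (n + 1) →o Fin (n' + 1)).monotone.functor ⋙ x' = x
    refine CategoryTheory.Functor.ext (fun i => hobj i) (fun i j f => ?_)
    obtain ⟨e1, e2, hkey⟩ := key_rep x' (hbsm.monotone (leOfHom f)) (a.monotone (leOfHom f))
      (isIdArrow_map_congr x' min_le_max min_le_max (min_comm _ _) (max_comm _ _) (hsim i))
      (isIdArrow_map_congr x' min_le_max min_le_max (min_comm _ _) (max_comm _ _) (hsim j))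
    have hcongr := Functor.congr_hom hcomp f
    show x'.map (homOfLE (hbsm.monotone (leOfHom f)))
        = eqToHom (hobj i) ≫ x.map f ≫ eqToHom (hobj j).symm
    have hxm : x.map f = eqToHom (Functor.congr_obj hcomp i).symm
        ≫ (a.monotone.functor ⋙ x').map f
        ≫ eqToHom (Functor.congr_obj hcomp j) := by
      rw [hcongr]; simp only [Category.assoc, eqToHom_trans_assoc, eqToHom_trans, eqToHom_refl, Category.id_comp, Category.comp_id]
    have hkey' : x'.map (homOfLE (hbsm.monotone (leOfHom f)))
        = eqToHom e1 ≫ (a.monotone.functor ⋙ x').map f ≫ eqToHom e2 := hkey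
    rw [hkey', hxm]
    simp only [Category.assoc, eqToHom_trans_assoc, eqToHom_trans, eqToHom_refl, Category.id_comp, Category.comp_id]; rfl
  exact ⟨⟨bf, hbsm.monotone⟩, hbsm.injective, hb0, hbl, hbcomp, hsim⟩
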